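/- Let d, N₊, N₋ be positive integers, L ≥ 0, and for each i ∈ {1,…,N₊} and j ∈ {1,…,N₋} let s_{ij} : ℝ^d → ℝ be differentiable with L-Lipschitz gradient (i.e. ‖∇s_{ij}(w) − ∇s_{ij}(v)‖ ≤ L‖w−v‖ for all w,v). For an integer 0 ≤ l ≤ N₋ define f^l(w) = Σ_{i=1}^{N₊} φ_l((s_{ij}(w))_{j=1}^{N₋}). Then f^l is ρ-weakly convex with ρ = N₊N₋L; that is, the function w ↦ f^l(w) + (N₊N₋L/2)‖w‖² is convex on ℝ^d. -/

import Mathlib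

open scoped RealInnerProductSpace

/-- `sumTop l s` is the sum of the `l` largest entries of `s ∈ ℝ^N`, i.e.
`φ_l(s) = max { ∑_{j∈J} s_j : J ⊆ {1,…,N}, |J| = l }`. -/
noncomputable def sumTop {N : ℕ} (l : ℕ) (s : Fin N → ℝ) : ℝ :=
  sSup {x : ℝ | ∃ J : Finset (Fin N), J.card = l ∧ x = ∑ j ∈ J, s j}


variable {F : Type*} [NormedAddCommGroup F] [InnerProductSpace ℝ F] [CompleteSpace F]

/-- Monotone gradient implies convexity. -/
lemma convexOn_of_monotone_gradient (f : F → ℝ) (G : F → F)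
    (hdiff : ∀ x, HasGradientAt f (G x) x)
    (hmono : ∀ x y : F, 0 ≤ ⟪G y - G x, y - x⟫) :
    ConvexOn ℝ Set.univ f := by
  refine ⟨convex_univ, ?_⟩
  intro x _ y _ a b ha hb hab
  set g : ℝ → ℝ := fun t => f (x + t • (y - x)) with hgdef
  have hline : ∀ t : ℝ, HasDerivAt (fun t : ℝ => x + t • (y - x)) (y - x) t := by
    intro t
    simpa using ((hasDerivAt_id t).smul_const (y - x)).const_add x
  have hg : ∀ t : ℝ, HasDerivAt g ⟪G (x + t • (y - x)), y - x⟫ t := by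
    intro t
    have h := ((hdiff (x + t • (y - x))).hasFDerivAt).comp_hasDerivAt t (hline t)
    simp [InnerProductSpace.toDual_apply_apply] at h
    exact h
  have hderiv : deriv g = fun t => ⟪G (x + t • (y - x)), y - x⟫ := by
    funext t; exact (hg t).deriv
  have hmono' : Monotone (deriv g) := by
    rw [hderiv]
    intro u v huv
    rcases eq_or_lt_of_le huv with rfl | hlt
    · exact le_refl _
    · have key := hmono (x + u • (y - x)) (x + v • (y - x))
      have hsub : (x + v • (y - x)) - (x + u • (y - x)) = (v - u) • (y - x) := by
        rw [sub_smul]; abel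
      rw [hsub, real_inner_smul_right] at key
      simp only [inner_sub_left] at key
      nlinarith [key]
  have hgc : ConvexOn ℝ Set.univ g :=
    Monotone.convexOn_univ_of_deriv (fun t => (hg t).differentiableAt) hmono'
  have h01 := hgc.2 (Set.mem_univ (0 : ℝ)) (Set.mem_univ (1 : ℝ)) ha hb hab
  have e0 : g 0 = f x := by simp [hgdef]
  have e1 : g 1 = f y := by simp [hgdef]
  have eb : g (a • (0:ℝ) + b • 1) = f (a • x + b • y) := by
    have h1 : a • (0:ℝ) + b • 1 = b := by simp
    have h2 : x + b • (y - x) = a • x + b • y := by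
      have hab' : a = 1 - b := by linarith
      rw [hab']; module
    rw [hgdef]; simp only [h1, h2]
  rw [e0, e1, eb] at h01
  simpa using h01

/-- Lipschitz gradient implies weak convexity. -/
lemma convexOn_add_half_sq (f : F → ℝ) (G : F → F) (K : ℝ)
    (hdiff : ∀ x, HasGradientAt f (G x) x)
    (hlip : ∀ x y : F, ‖G y - G x‖ ≤ K * ‖y - x‖) :
    ConvexOn ℝ Set.univ (fun w => f w + K / 2 * ‖w‖ ^ 2) := by
  apply convexOn_of_monotone_gradient _ (fun w => G w + K • w)
  · intro x
    rw [hasGradientAt_iff_hasFDerivAt]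
    have h2 : HasFDerivAt (fun w : F => K / 2 * ‖w‖ ^ 2)
        ((K / 2) • (2 • innerSL ℝ x)) x :=
      (hasStrictFDerivAt_norm_sq x).hasFDerivAt.const_mul (K / 2)
    have h := (hdiff x).hasFDerivAt.add h2
    refine h.congr_fderiv ?_
    ext v
    simp only [InnerProductSpace.toDual_apply_apply, ContinuousLinearMap.add_apply,
      ContinuousLinearMap.smul_apply, innerSL_apply_apply, smul_eq_mul, inner_add_left,
      real_inner_smul_left]
    ring
  · intro x y
    have h2 := abs_real_inner_le_norm (G y - G x) (y - x)
    have h3 : ⟪(G y + K • y) - (G x + K • x), y - x⟫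
        = ⟪G y - G x, y - x⟫ + K * ‖y - x‖ ^ 2 := by
      rw [show (G y + K • y) - (G x + K • x) = (G y - G x) + K • (y - x) by
        rw [smul_sub]; abel]
      rw [inner_add_left, real_inner_smul_left, real_inner_self_eq_norm_sq]
    show (0:ℝ) ≤ ⟪(G y + K • y) - (G x + K • x), y - x⟫
    rw [h3]
    nlinarith [abs_le.1 h2, hlip x y, norm_nonneg (y - x), norm_nonneg (G y - G x)]

lemma sumTop_eq_sup' {N l : ℕ} (s : Fin N → ℝ)
    (hne : (Finset.powersetCard l (Finset.univ : Finset (Fin N))).Nonempty) :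
    sumTop l s = (Finset.powersetCard l Finset.univ).sup' hne (fun J => ∑ j ∈ J, s j) := by
  rw [Finset.sup'_eq_csSup_image]
  unfold sumTop
  congr 1
  ext x
  simp only [Set.mem_setOf_eq, Set.mem_image, Finset.mem_coe, Finset.mem_powersetCard]
  constructor
  · rintro ⟨J, hJ, rfl⟩
    exact ⟨J, ⟨Finset.subset_univ J, hJ⟩, rfl⟩
  · rintro ⟨J, ⟨_, hJ⟩, rfl⟩
    exact ⟨J, hJ, rfl⟩

lemma convexOn_sup' {ι : Type*} {E : Type*} [AddCommGroup E] [Module ℝ E]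
    (t : Finset ι) (ht : t.Nonempty) (f : ι → E → ℝ)
    (hf : ∀ i ∈ t, ConvexOn ℝ Set.univ (f i)) :
    ConvexOn ℝ Set.univ (fun w => t.sup' ht (fun i => f i w)) := by
  induction ht using Finset.Nonempty.cons_induction with
  | singleton a =>
    simp only [Finset.sup'_singleton]
    exact hf a (by simp)
  | cons a s ha hs ih =>
    simp only [Finset.sup'_cons hs]
    exact (hf a (by simp)).sup (ih fun i hi => hf i (Finset.mem_cons_of_mem hi))

lemma convexOn_finset_sum {ι : Type*} {E : Type*} [AddCommGroup E] [Module ℝ E]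
    (t : Finset ι) (f : ι → E → ℝ)
    (hf : ∀ i ∈ t, ConvexOn ℝ Set.univ (f i)) :
    ConvexOn ℝ Set.univ (fun w => ∑ i ∈ t, f i w) := by
  induction t using Finset.cons_induction with
  | empty => simpa using convexOn_const (0:ℝ) convex_univ
  | cons a s ha ih =>
    simp only [Finset.sum_cons]
    exact (hf a (by simp)).add (ih fun i hi => hf i (Finset.mem_cons_of_mem hi))


/-- If each `s i j : ℝ^d → ℝ` is differentiable with `L`-Lipschitz gradient, then
`f^l(w) = ∑_i φ_l((s_{ij}(w))_j)` is `ρ`-weakly convex with `ρ = N₊N₋L`, i.e.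
`w ↦ f^l(w) + (N₊N₋L/2)‖w‖²` is convex on `ℝ^d`. -/
theorem stmt0 (d Np Nm : ℕ) (hd : 0 < d) (hNp : 0 < Np) (hNm : 0 < Nm)
    (L : ℝ) (hL : 0 ≤ L)
    (s : Fin Np → Fin Nm → EuclideanSpace ℝ (Fin d) → ℝ)
    (grad : Fin Np → Fin Nm → EuclideanSpace ℝ (Fin d) → EuclideanSpace ℝ (Fin d))
    (hdiff : ∀ i j w, HasGradientAt (s i j) (grad i j w) w)
    (hlip : ∀ (i : Fin Np) (j : Fin Nm) (w v : EuclideanSpace ℝ (Fin d)),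
      ‖grad i j w - grad i j v‖ ≤ L * ‖w - v‖)
    (l : ℕ) (hl : l ≤ Nm) :
    ConvexOn ℝ Set.univ
      (fun w : EuclideanSpace ℝ (Fin d) =>
        (∑ i, sumTop l (fun j => s i j w)) + ((Np : ℝ) * Nm * L / 2) * ‖w‖ ^ 2) := by
  have hne : (Finset.powersetCard l (Finset.univ : Finset (Fin Nm))).Nonempty :=
    Finset.powersetCard_nonempty.2 (by simpa using hl)
  -- convexity of each inner weakly-regularized term
  have key : ∀ i : Fin Np, ConvexOn ℝ Set.univ
      (fun w : EuclideanSpace ℝ (Fin d) =>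
        sumTop l (fun j => s i j w) + (Nm : ℝ) * L / 2 * ‖w‖ ^ 2) := by
    intro i
    have heq : (fun w : EuclideanSpace ℝ (Fin d) =>
          sumTop l (fun j => s i j w) + (Nm : ℝ) * L / 2 * ‖w‖ ^ 2)
        = fun w => (Finset.powersetCard l Finset.univ).sup' hne
            (fun J => (∑ j ∈ J, s i j w) + (Nm : ℝ) * L / 2 * ‖w‖ ^ 2) := by
      funext w
      rw [sumTop_eq_sup' _ hne]
      exact Finset.comp_sup'_eq_sup'_comp hne (fun x : ℝ => x + (Nm : ℝ) * L / 2 * ‖w‖ ^ 2)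
        (fun x y => (max_add_add_right x y _).symm)
    rw [heq]
    apply convexOn_sup'
    intro J hJ
    have hJcard : (J.card : ℝ) ≤ (Nm : ℝ) := by
      have := (Finset.mem_powersetCard.mp hJ).2
      exact_mod_cast this ▸ Nat.cast_le.mpr hl
    exact convexOn_add_half_sq (fun w => ∑ j ∈ J, s i j w)
      (fun w => ∑ j ∈ J, grad i j w) ((Nm : ℝ) * L)
      (fun x => by
        rw [hasGradientAt_iff_hasFDerivAt, map_sum]
        exact HasFDerivAt.fun_sum fun j _ => (hdiff i j x).hasFDerivAt)
      (fun x y => by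
        calc ‖(∑ j ∈ J, grad i j y) - ∑ j ∈ J, grad i j x‖
            = ‖∑ j ∈ J, (grad i j y - grad i j x)‖ := by rw [Finset.sum_sub_distrib]
          _ ≤ ∑ j ∈ J, ‖grad i j y - grad i j x‖ := norm_sum_le _ _
          _ ≤ ∑ _j ∈ J, L * ‖y - x‖ := Finset.sum_le_sum fun j _ => hlip i j y x
          _ = (J.card : ℝ) * (L * ‖y - x‖) := by rw [Finset.sum_const, nsmul_eq_mul]
          _ ≤ (Nm : ℝ) * L * ‖y - x‖ := by
              nlinarith [norm_nonneg (y - x), mul_nonneg hL (norm_nonneg (y - x))])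
  have heq2 : (fun w : EuclideanSpace ℝ (Fin d) =>
        (∑ i, sumTop l (fun j => s i j w)) + (Np : ℝ) * Nm * L / 2 * ‖w‖ ^ 2)
      = fun w => ∑ i : Fin Np,
          (sumTop l (fun j => s i j w) + (Nm : ℝ) * L / 2 * ‖w‖ ^ 2) := by
    funext w
    rw [Finset.sum_add_distrib, Finset.sum_const, Finset.card_univ, Fintype.card_fin,
      nsmul_eq_mul]
    ring
  rw [heq2]
  exact convexOn_finset_sum _ _ fun i _ => key i
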